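/- arXiv:2512.04301 — 4 statements merged into one kernel-verified Lean document; each statement's English description precedes it below -/
import Mathlib

section
/- Let varphi : R^n -> [0,infinity] be a proper lower semi-continuous convex function with varphi(0) = 0, and let L(varphi)(y) = sup_x (<x,y> - varphi(x)) be its Legendre transform. Then for all s, t > 0: t * ({x : varphi(x) <= t})^polar is contained in {y : L(varphi)(y) <= t}, which in turn is contained in (t+s) * ({x : varphi(x) <= s})^polar. -/
open Set
open scoped ENNReal Pointwise

/-- The polar of a set `A ⊆ ℝⁿ`: `A° = {y : ⟪x,y⟫ ≤ 1 for all x ∈ A}`. -/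
def polarSet {n : ℕ} (A : Set (EuclideanSpace ℝ (Fin n))) : Set (EuclideanSpace ℝ (Fin n)) :=
  {y | ∀ x ∈ A, (inner ℝ x y : ℝ) ≤ 1}

/-- The Legendre transform `L(φ)(y) = sup_x (⟪x,y⟫ - φ(x))` of a `[0,∞]`-valued function,
with values in the extended reals. -/
noncomputable def legendre {n : ℕ} (φ : EuclideanSpace ℝ (Fin n) → ℝ≥0∞)
    (y : EuclideanSpace ℝ (Fin n)) : EReal :=
  ⨆ x : EuclideanSpace ℝ (Fin n), (((inner ℝ x y : ℝ) : EReal) - (φ x : EReal))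

/-- Fradelizi–Meyer: if `φ : ℝⁿ → [0,∞]` is a proper l.s.c. convex function with `φ(0)=0`,
then for all `s,t > 0`,
`t ⋅ {φ ≤ t}° ⊆ {L(φ) ≤ t} ⊆ (t+s) ⋅ {φ ≤ s}°`. -/
theorem stmt10 {n : ℕ} (φ : EuclideanSpace ℝ (Fin n) → ℝ≥0∞)
    (hproper : ∃ x, φ x ≠ ⊤)
    (hlsc : LowerSemicontinuous φ)
    (hconv : ∀ x y : EuclideanSpace ℝ (Fin n), ∀ a b : ℝ, 0 ≤ a → 0 ≤ b → a + b = 1 →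
      φ (a • x + b • y) ≤ ENNReal.ofReal a * φ x + ENNReal.ofReal b * φ y)
    (h0 : φ 0 = 0)
    (s t : ℝ) (hs : 0 < s) (ht : 0 < t) :
    t • polarSet {x | φ x ≤ ENNReal.ofReal t} ⊆ {y | legendre φ y ≤ (t : EReal)} ∧
    {y | legendre φ y ≤ (t : EReal)} ⊆ (t + s) • polarSet {x | φ x ≤ ENNReal.ofReal s} := by
  constructor
  · rintro y ⟨z, hz, rfl⟩
    simp only [mem_setOf_eq, legendre]
    apply iSup_le
    intro x
    by_cases hx : φ x = ⊤
    · rw [hx]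
      rw [EReal.coe_ennreal_top, EReal.sub_top]
      exact bot_le
    · have hr0 : 0 ≤ (φ x).toReal := ENNReal.toReal_nonneg
      set r : ℝ := (φ x).toReal with hrdef
      have hphi : φ x = ENNReal.ofReal r := by
        rw [hrdef, ENNReal.ofReal_toReal hx]
      have hφr : (φ x : EReal) = (r : EReal) := by
        rw [hphi, EReal.coe_ennreal_ofReal, max_eq_left hr0]
      have hinner : (inner ℝ x (t • z) : ℝ) = t * (inner ℝ x z : ℝ) := real_inner_smul_right x z t
      have key : (inner ℝ x (t • z) : ℝ) ≤ t + r := by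
        rcases le_or_gt r t with hrt | htr
        · have hxmem : x ∈ {x | φ x ≤ ENNReal.ofReal t} := by
            simp only [mem_setOf_eq, hphi]
            exact ENNReal.ofReal_le_ofReal hrt
          have := hz x hxmem
          rw [hinner]
          nlinarith
        · -- scale down: c = t / r ∈ (0,1)
          have hrpos : 0 < r := ht.trans htr
          set c : ℝ := t / r with hcdef
          have hc0 : 0 < c := div_pos ht hrpos
          have hc1 : c < 1 := (div_lt_one hrpos).mpr htr
          have hφc : φ (c • x) ≤ ENNReal.ofReal t := by
            have := hconv x 0 c (1 - c) hc0.le (by linarith) (by ring)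
            simp only [smul_zero, add_zero, h0, mul_zero] at this
            calc φ (c • x) ≤ ENNReal.ofReal c * φ x := this
              _ = ENNReal.ofReal c * ENNReal.ofReal r := by rw [hphi]
              _ = ENNReal.ofReal (c * r) := (ENNReal.ofReal_mul hc0.le).symm
              _ = ENNReal.ofReal t := by rw [hcdef, div_mul_cancel₀ _ hrpos.ne']
          have hmem : c • x ∈ {x | φ x ≤ ENNReal.ofReal t} := hφc
          have h1 : (inner ℝ (c • x) z : ℝ) ≤ 1 := hz _ hmem
          rw [real_inner_smul_left] at h1
          have hiz : (inner ℝ x z : ℝ) ≤ 1 / c := by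
            rw [le_div_iff₀ hc0]
            linarith [h1]
          have : t * (inner ℝ x z : ℝ) ≤ t * (1 / c) := by
            exact mul_le_mul_of_nonneg_left hiz ht.le
          rw [hinner]
          have hc : t * (1 / c) = r := by
            field_simp [hcdef]
            rw [hcdef, div_mul_cancel₀ _ hrpos.ne']
          nlinarith
      rw [hφr]
      have : (((inner ℝ x (t • z) : ℝ) : EReal) - ((r : ℝ) : EReal)) = (((inner ℝ x (t • z) : ℝ) - r : ℝ) : EReal) := by
        rw [EReal.coe_sub]
      rw [this]
      exact_mod_cast by linarith [key]
  · intro y hy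
    have hts : (0 : ℝ) < t + s := by linarith
    rw [Set.mem_smul_set_iff_inv_smul_mem₀ hts.ne']
    intro x hx
    have hx' : φ x ≤ ENNReal.ofReal s := hx
    have hxtop : φ x ≠ ⊤ := (hx'.trans_lt ENNReal.ofReal_lt_top).ne
    set r : ℝ := (φ x).toReal with hrdef
    have hrs : r ≤ s := by
      rw [hrdef]
      exact ENNReal.toReal_le_of_le_ofReal hs.le hx'
    have hle : (((inner ℝ x y : ℝ) : EReal) - (φ x : EReal)) ≤ (t : EReal) :=
      le_trans (le_iSup (fun x => (((inner ℝ x y : ℝ) : EReal) - (φ x : EReal))) x) hy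
    have hr0 : 0 ≤ r := ENNReal.toReal_nonneg
    have hφr : (φ x : EReal) = (r : EReal) := by
      rw [hrdef, ← ENNReal.ofReal_toReal hxtop, ENNReal.toReal_ofReal ENNReal.toReal_nonneg,
        EReal.coe_ennreal_ofReal, max_eq_left ENNReal.toReal_nonneg]
    rw [hφr, ← EReal.coe_sub, EReal.coe_le_coe_iff] at hle
    have hiy : (inner ℝ x y : ℝ) ≤ t + s := by linarith
    have : (inner ℝ x ((t + s)⁻¹ • y) : ℝ) = (t + s)⁻¹ * (inner ℝ x y : ℝ) :=
      real_inner_smul_right x y _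
    rw [this]
    rw [inv_mul_le_iff₀ hts, mul_one]
    exact hiy
end

section
/- Let f = e^{-varphi} where varphi : R^n -> [0,infinity] is a proper l.s.c. convex function with varphi(0) = 0, and let f* = e^{-L(varphi)} be its Legendre dual. Define R_f = {x : f(x) >= e^{-50n}} and R_{f*} = {x : f*(x) >= e^{-50n}}. Then 50n (R_f)^polar is contained in R_{f*}, which is contained in 100n (R_f)^polar. -/
open Set
open scoped ENNReal Pointwise

private lemma ennreal_coe_ereal_eq (a : ℝ≥0∞) (h : a ≠ ⊤) :
    (a : EReal) = ((a.toReal : ℝ) : EReal) := by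
  conv_lhs => rw [← ENNReal.ofReal_toReal h]
  rw [EReal.coe_ennreal_ofReal, max_eq_left ENNReal.toReal_nonneg]

/-- Let `f = e^{-φ}` with `φ` a proper l.s.c. convex function, `φ(0) = 0`, and let
`f* = e^{-L(φ)}` be its Legendre dual. With `R_f = {f ≥ e^{-50n}} = {φ ≤ 50n}` and
`R_{f*} = {f* ≥ e^{-50n}} = {L(φ) ≤ 50n}`, one has
`50n (R_f)° ⊆ R_{f*} ⊆ 100n (R_f)°`. -/
theorem stmt11 {n : ℕ} (hn : 1 ≤ n) (φ : EuclideanSpace ℝ (Fin n) → ℝ≥0∞)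
    (hproper : ∃ x, φ x ≠ ⊤)
    (hlsc : LowerSemicontinuous φ)
    (hconv : ∀ x y : EuclideanSpace ℝ (Fin n), ∀ a b : ℝ, 0 ≤ a → 0 ≤ b → a + b = 1 →
      φ (a • x + b • y) ≤ ENNReal.ofReal a * φ x + ENNReal.ofReal b * φ y)
    (h0 : φ 0 = 0) :
    (50 * (n : ℝ)) • polarSet {x | φ x ≤ (50 * (n : ℝ≥0∞))}
        ⊆ {y | legendre φ y ≤ ((50 * (n : ℝ)) : EReal)} ∧
    {y | legendre φ y ≤ ((50 * (n : ℝ)) : EReal)}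
        ⊆ (100 * (n : ℝ)) • polarSet {x | φ x ≤ (50 * (n : ℝ≥0∞))} := by
  have hn' : (0:ℝ) < n := by exact_mod_cast Nat.lt_of_lt_of_le Nat.zero_lt_one hn
  have h50 : (0:ℝ) < 50 * n := by positivity
  have h100 : (0:ℝ) < 100 * n := by positivity
  have hcoe : ((50 * (n : ℝ≥0∞)) : ℝ≥0∞).toReal = 50 * n := by
    simp [ENNReal.toReal_mul]
  have hfin : (50 * (n : ℝ≥0∞)) ≠ ⊤ := by
    simp [ENNReal.mul_ne_top]
  have hK : ((50 * (n : ℝ)) : EReal) = (((50 * (n:ℝ) : ℝ)) : EReal) := by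
    rw [EReal.coe_mul]; rfl
  constructor
  · rintro z hz
    rcases hz with ⟨y, hy, rfl⟩
    simp only [Set.mem_setOf_eq, legendre]
    apply iSup_le
    intro x
    by_cases hx : φ x = ⊤
    · rw [hx]; simp only [EReal.coe_ennreal_top, EReal.sub_top]; exact bot_le
    · rw [ennreal_coe_ereal_eq _ hx, ← EReal.coe_sub, hK, EReal.coe_le_coe_iff]
      have hinner : (inner ℝ x ((50 * (n:ℝ)) • y) : ℝ) = (50 * n) * inner ℝ x y :=
        real_inner_smul_right x y (50 * n)
      rw [hinner]
      by_cases hmem : φ x ≤ 50 * (n : ℝ≥0∞)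
      · have h1 : (inner ℝ x y : ℝ) ≤ 1 := hy x hmem
        have : (50 * (n:ℝ)) * inner ℝ x y ≤ 50 * n := by nlinarith
        have h2 : (0:ℝ) ≤ (φ x).toReal := ENNReal.toReal_nonneg
        linarith
      · push_neg at hmem
        have hxne : (φ x).toReal > 50 * n := by
          have := (ENNReal.toReal_lt_toReal hfin hx).2 hmem
          rwa [hcoe] at this
        set c : ℝ := (φ x).toReal with hc
        set t : ℝ := (50 * n) / c with ht
        have hcpos : 0 < c := lt_trans h50 hxne
        have ht0 : 0 < t := div_pos h50 hcpos
        have ht1 : t ≤ 1 := by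
          rw [div_le_one hcpos]; linarith
        have htc : t * c = 50 * n := div_mul_cancel₀ _ (ne_of_gt hcpos)
        -- φ (t • x) ≤ 50n
        have hφt : φ (t • x) ≤ 50 * (n : ℝ≥0∞) := by
          have := hconv x 0 t (1 - t) (le_of_lt ht0) (by linarith) (by ring)
          simp only [smul_zero, add_zero, h0, mul_zero] at this
          calc φ (t • x) ≤ ENNReal.ofReal t * φ x := this
            _ = ENNReal.ofReal t * ENNReal.ofReal c := by
                rw [ENNReal.ofReal_toReal hx]
            _ = ENNReal.ofReal (t * c) := by
                rw [ENNReal.ofReal_mul (le_of_lt ht0)]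
            _ = 50 * (n : ℝ≥0∞) := by
                rw [htc, ← hcoe, ENNReal.ofReal_toReal hfin]
        have h1 : (inner ℝ (t • x) y : ℝ) ≤ 1 := hy _ hφt
        rw [real_inner_smul_left] at h1
        -- so inner ℝ x y ≤ c / (50 n)
        have h2 : (inner ℝ x y : ℝ) ≤ c / (50 * n) := by
          calc (inner ℝ x y : ℝ) ≤ 1 / t := (le_div_iff₀' ht0).mpr h1
            _ = c / (50 * n) := by
                rw [ht, one_div_div]
        have h3 : (50 * (n:ℝ)) * inner ℝ x y ≤ c := by
          have := mul_le_mul_of_nonneg_left h2 (le_of_lt h50)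
          rwa [mul_div_cancel₀ _ (ne_of_gt h50)] at this
        linarith
  · intro y hy
    simp only [Set.mem_setOf_eq, legendre] at hy
    refine ⟨(100 * (n:ℝ))⁻¹ • y, ?_, smul_inv_smul₀ (ne_of_gt h100) y⟩
    intro x hx
    have hterm : (((inner ℝ x y : ℝ) : EReal) - (φ x : EReal)) ≤ ((50 * (n : ℝ)) : EReal) :=
      le_trans (le_iSup (fun x => (((inner ℝ x y : ℝ) : EReal) - (φ x : EReal))) x) hy
    have hxfin : φ x ≠ ⊤ := ne_top_of_le_ne_top hfin hx
    rw [ennreal_coe_ereal_eq _ hxfin, ← EReal.coe_sub, hK, EReal.coe_le_coe_iff] at hterm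
    have hcle : (φ x).toReal ≤ 50 * n := by
      have := (ENNReal.toReal_le_toReal hxfin hfin).2 hx
      rwa [hcoe] at this
    have h4 : (inner ℝ x y : ℝ) ≤ 100 * n := by linarith
    rw [real_inner_smul_right]
    rw [inv_mul_le_iff₀ h100, mul_one]
    exact h4
end

section
/- Let varphi : R^n -> [0,infinity] be a geometric convex function (proper, l.s.c., convex, varphi(0) = 0) and define its polar varphi^circ(x) = sup_y (<x,y> - 1)/varphi(y). Then for every t > 0, ({x : varphi(x) < 1/t})^polar is contained in {x : varphi^circ(x) <= t}, which is contained in 2 ({x : varphi(x) < 1/t})^polar. -/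
open Set
open scoped ENNReal Pointwise

/-- The polarity (`𝒜`-transform) of a geometric convex function:
`φ°(x) = sup_y (⟪x,y⟫ - 1)/φ(y)`, valued in `[0,∞]` (with the usual `ℝ≥0∞` division
conventions handling the cases `φ(y) = 0` and `φ(y) = ∞`). -/
noncomputable def Atrans {n : ℕ} (φ : EuclideanSpace ℝ (Fin n) → ℝ≥0∞)
    (x : EuclideanSpace ℝ (Fin n)) : ℝ≥0∞ :=
  ⨆ y : EuclideanSpace ℝ (Fin n), ENNReal.ofReal ((inner ℝ x y : ℝ) - 1) / φ y

/-- Milman–Rotem: if `φ` is a geometric convex function (proper, l.s.c., convex, `φ(0)=0`),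
then for every `t > 0`,
`({φ < 1/t})° ⊆ {φ° ≤ t} ⊆ 2({φ < 1/t})°`. -/
theorem stmt12 {n : ℕ} (φ : EuclideanSpace ℝ (Fin n) → ℝ≥0∞)
    (hproper : ∃ x, φ x ≠ ⊤)
    (hlsc : LowerSemicontinuous φ)
    (hconv : ∀ x y : EuclideanSpace ℝ (Fin n), ∀ a b : ℝ, 0 ≤ a → 0 ≤ b → a + b = 1 →
      φ (a • x + b • y) ≤ ENNReal.ofReal a * φ x + ENNReal.ofReal b * φ y)
    (h0 : φ 0 = 0)
    (t : ℝ) (ht : 0 < t) :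
    polarSet {x | φ x < ENNReal.ofReal (1 / t)} ⊆ {x | Atrans φ x ≤ ENNReal.ofReal t} ∧
    {x | Atrans φ x ≤ ENNReal.ofReal t}
      ⊆ (2 : ℝ) • polarSet {x | φ x < ENNReal.ofReal (1 / t)} := by
  constructor
  · -- first inclusion
    intro x hx
    simp only [mem_setOf_eq, Atrans, iSup_le_iff]
    intro y
    rcases eq_or_ne (φ y) ⊤ with hT | hT
    · simp [hT]
    rcases lt_or_ge (φ y) (ENNReal.ofReal (1 / t)) with hy | hy
    · have h1 : (inner ℝ y x : ℝ) ≤ 1 := hx y hy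
      have : (inner ℝ x y : ℝ) ≤ 1 := by rwa [real_inner_comm]
      have hz : ENNReal.ofReal ((inner ℝ x y : ℝ) - 1) = 0 := ENNReal.ofReal_eq_zero.2 (by linarith)
      rw [hz, ENNReal.zero_div]
      exact zero_le
    · -- 1/t ≤ φ y < ∞
      set c := (φ y).toReal with hc
      have hcy : φ y = ENNReal.ofReal c := (ENNReal.ofReal_toReal hT).symm
      have hc1 : 1 / t ≤ c := by
        have := ENNReal.toReal_mono hT hy
        rwa [ENNReal.toReal_ofReal (by positivity)] at this
      have hc0 : 0 < c := lt_of_lt_of_le (by positivity) hc1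
      have htc1 : 1 ≤ t * c := by
        rw [mul_comm]; exact (div_le_iff₀ ht).1 hc1
      rw [ENNReal.div_le_iff (by rw [hcy]; simpa using hc0.not_ge ∘ ENNReal.ofReal_eq_zero.1) hT,
        hcy, ← ENNReal.ofReal_mul ht.le]
      apply ENNReal.ofReal_le_ofReal
      have key : (inner ℝ x y : ℝ) ≤ t * c := by
        apply le_of_forall_pos_le_add
        intro ε hε
        set s := 1 / (t * c + ε) with hs
        have hden : 0 < t * c + ε := by linarith
        have hs0 : 0 < s := by positivity
        have hs1 : s ≤ 1 := by rw [hs, div_le_one hden]; linarith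
        have hmem : φ (s • y) < ENNReal.ofReal (1 / t) := by
          have hcv := hconv y 0 s (1 - s) hs0.le (by linarith) (by ring)
          simp only [smul_zero, add_zero, h0, mul_zero] at hcv
          calc φ (s • y) ≤ ENNReal.ofReal s * φ y := hcv
          _ = ENNReal.ofReal (s * c) := by rw [hcy, ← ENNReal.ofReal_mul hs0.le]
          _ < ENNReal.ofReal (1 / t) := by
              apply (ENNReal.ofReal_lt_ofReal_iff (by positivity)).2
              rw [hs, div_mul_eq_mul_div, div_lt_div_iff₀ hden ht]
              nlinarith
        have h1 : (inner ℝ (s • y) x : ℝ) ≤ 1 := hx _ hmem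
        rw [real_inner_smul_left] at h1
        have : (inner ℝ y x : ℝ) ≤ t * c + ε := by
          rw [← le_div_iff₀' hs0] at h1
          simpa [hs] using h1
        rwa [real_inner_comm]
      linarith
  · -- second inclusion
    intro x hx
    rw [Set.mem_smul_set_iff_inv_smul_mem₀ (two_ne_zero)]
    intro y hy
    simp only [mem_setOf_eq] at hx hy
    have hxy : (inner ℝ x y : ℝ) ≤ 2 := by
      have hle : ENNReal.ofReal ((inner ℝ x y : ℝ) - 1) / φ y ≤ ENNReal.ofReal t :=
        le_trans (le_iSup (fun z => ENNReal.ofReal ((inner ℝ x z : ℝ) - 1) / φ z) y) hx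
      rcases eq_or_ne (φ y) 0 with h0y | h0y
      · by_contra h
        have hnum : ENNReal.ofReal ((inner ℝ x y : ℝ) - 1) ≠ 0 := by
          simp only [ne_eq, ENNReal.ofReal_eq_zero, not_le]; linarith
        rw [h0y, ENNReal.div_zero hnum] at hle
        exact (ENNReal.ofReal_ne_top (le_top.antisymm hle)).elim
      · have hyT : φ y ≠ ⊤ := hy.ne_top
        rw [ENNReal.div_le_iff h0y hyT] at hle
        have : ENNReal.ofReal ((inner ℝ x y : ℝ) - 1) ≤ ENNReal.ofReal 1 := by
          calc ENNReal.ofReal ((inner ℝ x y : ℝ) - 1) ≤ ENNReal.ofReal t * φ y := hle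
          _ ≤ ENNReal.ofReal t * ENNReal.ofReal (1 / t) := mul_le_mul_right hy.le _
          _ = ENNReal.ofReal 1 := by
              rw [← ENNReal.ofReal_mul ht.le]; congr 1; field_simp
        have := (ENNReal.ofReal_le_ofReal_iff one_pos.le).1 this
        linarith
    have : (inner ℝ y ((2:ℝ)⁻¹ • x) : ℝ) = 2⁻¹ * (inner ℝ y x : ℝ) := real_inner_smul_right y x 2⁻¹
    rw [this, real_inner_comm]
    linarith
end

section
/- Let f = e^{-varphi} be a geometric log-concave function on R^n and define varphi_A(x) = (50n)^2 varphi^circ(x/n) and f_A = e^{-varphi_A}. Then with R_f = {x : f(x) >= e^{-50n}} and R_{f_A} = {x : f_A(x) >= e^{-50n}}, one has n (R_f)^polar contained in R_{f_A} contained in 2n (R_f)^polar. -/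
open Set
open scoped ENNReal Pointwise

/-- Let `f = e^{-φ}` be a geometric log-concave function, and set
`φ_𝒜(x) = (50n)² φ°(x/n)` and `f_𝒜 = e^{-φ_𝒜}`. With `R_f = {f ≥ e^{-50n}} = {φ ≤ 50n}`
and `R_{f_𝒜} = {f_𝒜 ≥ e^{-50n}} = {φ_𝒜 ≤ 50n}`, one has
`n (R_f)° ⊆ R_{f_𝒜} ⊆ 2n (R_f)°`. -/
theorem stmt13 {n : ℕ} (hn : 1 ≤ n) (φ : EuclideanSpace ℝ (Fin n) → ℝ≥0∞)
    (hproper : ∃ x, φ x ≠ ⊤)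
    (hlsc : LowerSemicontinuous φ)
    (hconv : ∀ x y : EuclideanSpace ℝ (Fin n), ∀ a b : ℝ, 0 ≤ a → 0 ≤ b → a + b = 1 →
      φ (a • x + b • y) ≤ ENNReal.ofReal a * φ x + ENNReal.ofReal b * φ y)
    (h0 : φ 0 = 0)
    (φA : EuclideanSpace ℝ (Fin n) → ℝ≥0∞)
    (hφA : ∀ x, φA x = (50 * (n : ℝ≥0∞)) ^ 2 * Atrans φ (((n : ℝ))⁻¹ • x)) :
    (n : ℝ) • polarSet {x | φ x ≤ (50 * (n : ℝ≥0∞))} ⊆ {x | φA x ≤ (50 * (n : ℝ≥0∞))} ∧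
    {x | φA x ≤ (50 * (n : ℝ≥0∞))}
      ⊆ (2 * (n : ℝ)) • polarSet {x | φ x ≤ (50 * (n : ℝ≥0∞))} := by
  set N : ℝ≥0∞ := 50 * (n : ℝ≥0∞) with hN
  have hnR : (0:ℝ) < (n:ℝ) := by exact_mod_cast hn
  have hN0 : N ≠ 0 := by
    rw [hN]
    exact mul_ne_zero (by norm_num) (Nat.cast_ne_zero.mpr (by omega))
  have hNt : N ≠ ⊤ := by
    rw [hN]
    exact ENNReal.mul_ne_top (by norm_num) (ENNReal.natCast_ne_top n)
  -- sublinearity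
  have hsub : ∀ (y : EuclideanSpace ℝ (Fin n)) (s : ℝ), 0 ≤ s → s ≤ 1 →
      φ (s • y) ≤ ENNReal.ofReal s * φ y := by
    intro y s hs0 hs1
    have := hconv y 0 s (1 - s) hs0 (by linarith) (by ring)
    simpa [h0] using this
  -- main claim relating sup and N
  have key : ∀ a : ℝ≥0∞, (N ^ 2 * a ≤ N ↔ a ≤ N⁻¹) := by
    intro a
    constructor
    · intro h
      have h2 : a * N ^ 2 ≤ N := by rwa [mul_comm]
      have := (ENNReal.le_div_iff_mul_le (Or.inl (pow_ne_zero 2 hN0))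
        (Or.inl (ENNReal.pow_ne_top hNt))).mpr h2
      calc a ≤ N / N ^ 2 := this
        _ = N⁻¹ := by
          rw [pow_two, ENNReal.div_eq_inv_mul, ENNReal.mul_inv (Or.inl hN0) (Or.inl hNt),
            mul_assoc, ENNReal.inv_mul_cancel hN0 hNt, mul_one]
    · intro h
      calc N ^ 2 * a ≤ N ^ 2 * N⁻¹ := mul_le_mul_right h _
        _ = N := by
          rw [pow_two, mul_assoc, ENNReal.mul_inv_cancel hN0 hNt, mul_one]
  constructor
  · rintro x ⟨y₀, hy₀, rfl⟩
    rw [mem_setOf_eq, hφA]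
    have hns : ((n:ℝ))⁻¹ • ((n:ℝ) • y₀) = y₀ := by
      rw [smul_smul, inv_mul_cancel₀ hnR.ne', one_smul]
    rw [hns, key]
    refine iSup_le fun y => ?_
    have hkey : ENNReal.ofReal ((inner ℝ y₀ y : ℝ) - 1) * N ≤ φ y := by
      set c : ℝ := (inner ℝ y₀ y : ℝ) with hc
      rcases le_or_gt c 1 with h1 | h1
      · simp [ENNReal.ofReal_eq_zero.mpr (by linarith : c - 1 ≤ 0)]
      · have hbig : ∀ s : ℝ, 0 ≤ s → s ≤ 1 → 1 < s * c → N < ENNReal.ofReal s * φ y := by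
          intro s hs0 hs1 hsc
          have hmem : φ (s • y) ≤ N → False := by
            intro hle
            have := hy₀ (s • y) hle
            rw [real_inner_smul_left, real_inner_comm, ← hc] at this
            linarith
          have : N < φ (s • y) := lt_of_not_ge hmem
          exact this.trans_le (hsub y s hs0 hs1)
        rcases le_or_gt c 2 with h2 | h2
        · have := hbig 1 zero_le_one le_rfl (by linarith)
          simp only [ENNReal.ofReal_one, one_mul] at this
          calc ENNReal.ofReal (c - 1) * N ≤ 1 * N := by
                gcongr
                exact ENNReal.ofReal_le_one.mpr (by linarith)
            _ = N := one_mul N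
            _ ≤ φ y := this.le
        · set s : ℝ := (c - 1)⁻¹ with hs
          have hs0 : 0 < s := inv_pos.mpr (by linarith)
          have hs1 : s ≤ 1 := by
            rw [hs]
            rw [inv_le_one_iff₀]; right; linarith
          have hsc : 1 < s * c := by
            rw [hs, inv_mul_eq_div, lt_div_iff₀ (by linarith)]
            linarith
          have hlt := hbig s hs0.le hs1 hsc
          calc ENNReal.ofReal (c - 1) * N
              ≤ ENNReal.ofReal (c - 1) * (ENNReal.ofReal s * φ y) := by
                exact mul_le_mul_right hlt.le _
            _ = (ENNReal.ofReal (c - 1) * ENNReal.ofReal s) * φ y := by ring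
            _ = φ y := by
                rw [← ENNReal.ofReal_mul (by linarith), hs,
                  mul_inv_cancel₀ (by linarith : c - 1 ≠ 0), ENNReal.ofReal_one, one_mul]
    -- now derive division bound
    have h1 : ENNReal.ofReal ((inner ℝ y₀ y : ℝ) - 1) ≤ N⁻¹ * φ y := by
      have := (ENNReal.le_div_iff_mul_le (Or.inl hN0) (Or.inl hNt)).mpr hkey
      rwa [ENNReal.div_eq_inv_mul] at this
    rw [ENNReal.div_le_iff_le_mul (Or.inr (ENNReal.inv_ne_top.mpr hN0))
      (Or.inr (ENNReal.inv_ne_zero.mpr hNt))]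
    exact h1
  · intro x hx
    rw [mem_setOf_eq, hφA, key] at hx
    have h2n : (2 * (n:ℝ)) ≠ 0 := by positivity
    rw [mem_smul_set_iff_inv_smul_mem₀ h2n]
    intro z hz
    have hle : ENNReal.ofReal ((inner ℝ (((n:ℝ))⁻¹ • x) z : ℝ) - 1) / φ z ≤ N⁻¹ :=
      (le_iSup (fun y => ENNReal.ofReal ((inner ℝ (((n:ℝ))⁻¹ • x) y : ℝ) - 1) / φ y) z).trans hx
    have h1 : ENNReal.ofReal ((inner ℝ (((n:ℝ))⁻¹ • x) z : ℝ) - 1) ≤ 1 := by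
      have := (ENNReal.div_le_iff_le_mul (Or.inr (ENNReal.inv_ne_top.mpr hN0))
        (Or.inr (ENNReal.inv_ne_zero.mpr hNt))).mp hle
      calc ENNReal.ofReal ((inner ℝ (((n:ℝ))⁻¹ • x) z : ℝ) - 1) ≤ N⁻¹ * φ z := this
        _ ≤ N⁻¹ * N := mul_le_mul_right hz _
        _ = 1 := ENNReal.inv_mul_cancel hN0 hNt
    have h2 : (inner ℝ (((n:ℝ))⁻¹ • x) z : ℝ) - 1 ≤ 1 := by
      by_contra hcon
      push_neg at hcon
      have : (1:ℝ≥0∞) < ENNReal.ofReal ((inner ℝ (((n:ℝ))⁻¹ • x) z : ℝ) - 1) := by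
        rw [← ENNReal.ofReal_one]
        exact ENNReal.ofReal_lt_ofReal_iff (by linarith) |>.mpr hcon
      exact absurd h1 this.not_ge
    rw [real_inner_smul_left] at h2
    rw [real_inner_comm, real_inner_smul_left]
    rw [mul_inv]
    have : (n:ℝ)⁻¹ * (inner ℝ x z : ℝ) ≤ 2 := by linarith
    nlinarith [this]
end
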